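/- Let σ be a K-linear automorphism and τ a K-linear autoequivalence of 𝒞ₙ with στ = τσ. Then there exists a unique scalar s ∈ K∖{0} such that for every natural isomorphism φ : σ → τ and every object i, σ(φ_i) = s·φ_{σ(i)}. Consequently, the following are equivalent: (1) there exists a skew-continuous natural isomorphism φ : σ → τ; (2) every natural isomorphism σ → τ is skew-continuous; (3) s = −1. -/
import Mathlib


open CategoryTheory

/-- The category `𝒞ₙ`: objects are `Fin n`, every hom-space is the one-dimensional
`K`-vector space `K`, and composition is multiplication in `K` (so the identity of
every object is `1 : K`). -/
def Cn (K : Type) (n : ℕ) : Type := Fin n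

section CnSetup

variable {K : Type} [Field K] {n : ℕ}

instance : Category (Cn K n) where
  Hom _ _ := K
  id _ := (1 : K)
  comp f g := @HMul.hMul K K K _ f g
  id_comp f := @one_mul K _ f
  comp_id f := @mul_one K _ f
  assoc f g h := @mul_assoc K _ f g h

instance : Preadditive (Cn K n) where
  homGroup _ _ := inferInstanceAs (AddCommGroup K)
  add_comp _ _ _ f f' g := @add_mul K _ _ _ f f' g
  comp_add _ _ _ f g g' := @mul_add K _ _ _ f g g'

instance : CategoryTheory.Linear K (Cn K n) where
  homModule _ _ := inferInstanceAs (Module K K)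
  smul_comp _ _ _ r f g := @smul_mul_assoc K K _ _ _ r f g
  comp_smul _ _ _ f r g := @mul_smul_comm K K _ _ _ r f g

/-- The morphism `X ⟶ Y` of `𝒞ₙ` given by the scalar `r`.  In particular
`CnHom j i 1` is the canonical basic morphism `x_{ij} : j ⟶ i`. -/
def CnHom (X Y : Cn K n) (r : K) : X ⟶ Y := r

/-- The scalar underlying a morphism of `𝒞ₙ`. -/
def toK {X Y : Cn K n} (f : X ⟶ Y) : K := f

end CnSetup

/-- A functor between `K`-linear categories is `K`-linear if it is additive on hom-spaces
and commutes with the action of `K` on hom-spaces. -/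
def IsKLinearFunctor (K : Type) [Field K] {C D : Type*} [Category C] [Category D]
    [Preadditive C] [Preadditive D] [CategoryTheory.Linear K C] [CategoryTheory.Linear K D]
    (F : C ⥤ D) : Prop :=
  (∀ (X Y : C) (f g : X ⟶ Y), F.map (f + g) = F.map f + F.map g) ∧
  (∀ (X Y : C) (r : K) (f : X ⟶ Y), F.map (r • f) = r • F.map f)

section Aux
variable {K : Type} [Field K] {n : ℕ}

lemma toK_inj {X Y : Cn K n} {f g : X ⟶ Y} (h : toK f = toK g) : f = g := h

lemma toK_comp {X Y Z : Cn K n} (f : X ⟶ Y) (g : Y ⟶ Z) : toK (f ≫ g) = toK f * toK g := rfl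

lemma toK_id (X : Cn K n) : toK (𝟙 X) = 1 := rfl

lemma toK_congr {F G : Cn K n ⥤ Cn K n} (h : F = G) {X Y : Cn K n} (f : X ⟶ Y) :
    toK (F.map f) = toK (G.map f) := by subst h; rfl

lemma map_scalar (F : Cn K n ⥤ Cn K n) (hF : IsKLinearFunctor K F) {X Y : Cn K n} (f : X ⟶ Y) :
    toK (F.map f) = toK f * toK (F.map (CnHom X Y 1)) := by
  have h1 : f = (toK f) • (CnHom X Y (1:K)) := (mul_one (toK f)).symm
  calc toK (F.map f) = toK (F.map ((toK f) • CnHom X Y 1)) := by rw [← h1]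
    _ = toK ((toK f) • F.map (CnHom X Y 1)) := by rw [hF.2]
    _ = toK f * toK (F.map (CnHom X Y 1)) := rfl

/-- The scalar by which a functor acts on the basic morphism `X ⟶ Y`. -/
def Uu (F : Cn K n ⥤ Cn K n) (X Y : Cn K n) : K := toK (F.map (CnHom X Y 1))

lemma Uu_cocycle (F : Cn K n ⥤ Cn K n) (X Y Z : Cn K n) :
    Uu F X Z = Uu F X Y * Uu F Y Z := by
  have h : CnHom X Z (1:K) = CnHom X Y 1 ≫ CnHom Y Z 1 := toK_inj (one_mul (1:K)).symm
  show toK (F.map (CnHom X Z 1)) = _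
  rw [h, F.map_comp]; rfl

lemma Uu_self (F : Cn K n ⥤ Cn K n) (X : Cn K n) : Uu F X X = 1 := by
  have h : CnHom X X (1:K) = 𝟙 X := rfl
  show toK (F.map (CnHom X X 1)) = 1
  rw [h, F.map_id]; rfl

lemma Uu_ne_zero (F : Cn K n ⥤ Cn K n) (hF : IsKLinearFunctor K F)
    (hf : ∀ {X Y : Cn K n} (f g : X ⟶ Y), F.map f = F.map g → f = g) (X Y : Cn K n) :
    Uu F X Y ≠ 0 := by
  intro h
  have h0 : toK (F.map (CnHom X Y (0:K))) = 0 := by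
    rw [map_scalar F hF]; show (0:K) * _ = 0; ring
  have : F.map (CnHom X Y (1:K)) = F.map (CnHom X Y (0:K)) := toK_inj (h.trans h0.symm)
  have := hf _ _ this
  exact (one_ne_zero : (1:K) ≠ 0) this

end Aux

section Aux2
variable {K : Type} [Field K] {n : ℕ}

def cnIso {X Y : Cn K n} (r : K) (hr : r ≠ 0) : X ≅ Y where
  hom := CnHom X Y r
  inv := CnHom Y X r⁻¹
  hom_inv_id := toK_inj (mul_inv_cancel₀ hr)
  inv_hom_id := toK_inj (inv_mul_cancel₀ hr)

lemma cnIso_hom {X Y : Cn K n} (r : K) (hr : r ≠ 0) : toK (cnIso (X := X) (Y := Y) r hr).hom = r := rfl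

lemma comp_ne_zero (σ τ : Cn K n ⥤ Cn K n) (φ : σ ≅ τ) (j : Cn K n) :
    toK (φ.hom.app j) ≠ 0 := by
  have h1 : toK (φ.hom.app j) * toK (φ.inv.app j) = 1 := congrArg toK (Iso.hom_inv_id_app φ j)
  exact left_ne_zero_of_mul_eq_one h1

end Aux2
/-- **Proposition (the `σ`-continuity factor and skew-continuity).**  For a `K`-linear
automorphism `σ` and a commuting `K`-linear autoequivalence `τ` of `𝒞ₙ`, there is a unique
nonzero scalar `s` with `σ(φ_i) = s • φ_{σ(i)}` for every natural isomorphism `φ : σ ≅ τ`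
and every object `i`; moreover (1) some natural isomorphism `σ ≅ τ` is skew-continuous iff
(2) every natural isomorphism `σ ≅ τ` is skew-continuous iff (3) `s = -1`. -/
theorem stmt6 (K : Type) [Field K] (n : ℕ) (hn : 0 < n)
    (σ τ : Cn K n ⥤ Cn K n)
    (hσl : IsKLinearFunctor K σ) (hτl : IsKLinearFunctor K τ)
    (hσa : ∃ σ' : Cn K n ⥤ Cn K n, σ ⋙ σ' = 𝟭 (Cn K n) ∧ σ' ⋙ σ = 𝟭 (Cn K n))
    (hτe : τ.IsEquivalence)
    (hcomm : σ ⋙ τ = τ ⋙ σ) :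
    (∃! s : K, s ≠ 0 ∧ ∀ (φ : σ ≅ τ) (i : Cn K n),
        toK (σ.map (φ.hom.app i)) = s * toK (φ.hom.app (σ.obj i))) ∧
    (∀ s : K, s ≠ 0 →
      (∀ (φ : σ ≅ τ) (i : Cn K n),
        toK (σ.map (φ.hom.app i)) = s * toK (φ.hom.app (σ.obj i))) →
      ((∃ φ : σ ≅ τ, ∀ i : Cn K n,
          toK (σ.map (φ.hom.app i)) = - toK (φ.hom.app (σ.obj i))) ↔
        (∀ φ : σ ≅ τ, ∀ i : Cn K n,
          toK (σ.map (φ.hom.app i)) = - toK (φ.hom.app (σ.obj i)))) ∧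
      ((∃ φ : σ ≅ τ, ∀ i : Cn K n,
          toK (σ.map (φ.hom.app i)) = - toK (φ.hom.app (σ.obj i))) ↔ s = -1)) := by
  
  classical
  obtain ⟨σ', hσ'1, _hσ'2⟩ := hσa
  -- σ is faithful
  have hσf : ∀ {X Y : Cn K n} (f g : X ⟶ Y), σ.map f = σ.map g → f = g := by
    intro X Y f g h
    have h1 : toK (σ'.map (σ.map f)) = toK f := toK_congr hσ'1 f
    have h2 : toK (σ'.map (σ.map g)) = toK g := toK_congr hσ'1 g
    apply toK_inj
    rw [← h1, ← h2, h]
  have hτf : ∀ {X Y : Cn K n} (f g : X ⟶ Y), τ.map f = τ.map g → f = g := by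
    intro X Y f g h
    exact τ.map_injective h
  have hUσ : ∀ X Y : Cn K n, Uu σ X Y ≠ 0 := Uu_ne_zero σ hσl (fun f g => hσf f g)
  have hUτ : ∀ X Y : Cn K n, Uu τ X Y ≠ 0 := Uu_ne_zero τ hτl (fun f g => hτf f g)
  set i₀ : Cn K n := ⟨0, hn⟩ with hi₀
  set s : K := Uu σ i₀ (τ.obj i₀) / Uu τ i₀ (σ.obj i₀) with hsdef
  have hs0 : s ≠ 0 := div_ne_zero (hUσ _ _) (hUτ _ _)
  -- naturality in scalar form
  have hnat : ∀ (φ : σ ⟶ τ) (X Y : Cn K n),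
      Uu σ X Y * toK (φ.app Y) = toK (φ.app X) * Uu τ X Y :=
    fun φ X Y => congrArg toK (φ.naturality (CnHom X Y 1))
  -- commutation in scalar form
  have hC : ∀ i : Cn K n,
      Uu σ i₀ i * Uu τ (σ.obj i₀) (σ.obj i) = Uu τ i₀ i * Uu σ (τ.obj i₀) (τ.obj i) := by
    intro i
    have h : toK (τ.map (σ.map (CnHom i₀ i (1:K)))) = toK (σ.map (τ.map (CnHom i₀ i (1:K)))) :=
      toK_congr hcomm (CnHom i₀ i 1)
    rw [map_scalar τ hτl, map_scalar σ hσl (τ.map (CnHom i₀ i 1))] at h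
    show Uu σ i₀ i * Uu τ (σ.obj i₀) (σ.obj i) = Uu τ i₀ i * Uu σ (τ.obj i₀) (τ.obj i)
    calc Uu σ i₀ i * Uu τ (σ.obj i₀) (σ.obj i)
        = toK (σ.map (CnHom i₀ i 1)) * toK (τ.map (CnHom (σ.obj i₀) (σ.obj i) 1)) := rfl
      _ = toK (τ.map (CnHom i₀ i 1)) * toK (σ.map (CnHom (τ.obj i₀) (τ.obj i) 1)) := h
      _ = Uu τ i₀ i * Uu σ (τ.obj i₀) (τ.obj i) := rfl
  -- the key property of s
  have key : ∀ (φ : σ ⟶ τ) (i : Cn K n),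
      toK (σ.map (φ.app i)) = s * toK (φ.app (σ.obj i)) := by
    intro φ i
    have e1 := hnat φ i₀ i
    have e2 := hnat φ i₀ (σ.obj i)
    have e3 := Uu_cocycle σ i₀ (σ.obj i) (τ.obj i)
    have e4 := Uu_cocycle τ i₀ (σ.obj i₀) (σ.obj i)
    have e5 := Uu_cocycle σ i₀ (τ.obj i₀) (τ.obj i)
    have eC := hC i
    have hms : toK (σ.map (φ.app i))
        = toK (φ.app i) * Uu σ (σ.obj i) (τ.obj i) := map_scalar σ hσl (φ.app i)
    rw [hms, hsdef]
    have ha := hUσ i₀ i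
    have hc := hUσ i₀ (σ.obj i)
    have hq := hUτ i₀ (σ.obj i₀)
    have hGoal : (Uu σ i₀ i * Uu σ i₀ (σ.obj i)) *
        (toK (φ.app i) * Uu σ (σ.obj i) (τ.obj i) * Uu τ i₀ (σ.obj i₀)) =
        (Uu σ i₀ i * Uu σ i₀ (σ.obj i)) *
        (Uu σ i₀ (τ.obj i₀) * toK (φ.app (σ.obj i))) := by
      linear_combination (Uu σ i₀ (σ.obj i) * Uu σ (σ.obj i) (τ.obj i) * Uu τ i₀ (σ.obj i₀)) * e1
        - (Uu σ i₀ i * Uu σ i₀ (τ.obj i₀)) * e2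
        - (toK (φ.app i₀) * Uu τ i₀ i * Uu τ i₀ (σ.obj i₀)) * e3
        - (Uu σ i₀ i * Uu σ i₀ (τ.obj i₀) * toK (φ.app i₀)) * e4
        + (toK (φ.app i₀) * Uu τ i₀ i * Uu τ i₀ (σ.obj i₀)) * e5
        - (Uu σ i₀ (τ.obj i₀) * Uu τ i₀ (σ.obj i₀) * toK (φ.app i₀)) * eC
    have hcan := mul_left_cancel₀ (mul_ne_zero ha hc) hGoal
    rw [div_mul_eq_mul_div, eq_div_iff hq]
    linear_combination hcan
  -- construct a natural isomorphism σ ≅ τ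
  have hcne : ∀ i : Cn K n, Uu τ i₀ i / Uu σ i₀ i ≠ 0 :=
    fun i => div_ne_zero (hUτ _ _) (hUσ _ _)
  have hnatc : ∀ {X Y : Cn K n} (f : X ⟶ Y),
      σ.map f ≫ (cnIso (X := σ.obj Y) (Y := τ.obj Y) _ (hcne Y)).hom =
      (cnIso (X := σ.obj X) (Y := τ.obj X) _ (hcne X)).hom ≫ τ.map f := by
    intro X Y f
    apply toK_inj
    rw [toK_comp, toK_comp, map_scalar σ hσl f, map_scalar τ hτl f]
    show (toK f * Uu σ X Y) * (Uu τ i₀ Y / Uu σ i₀ Y)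
        = (Uu τ i₀ X / Uu σ i₀ X) * (toK f * Uu τ X Y)
    have c1 := Uu_cocycle σ i₀ X Y
    have c2 := Uu_cocycle τ i₀ X Y
    have h1 := hUσ i₀ X
    have h2 := hUσ i₀ Y
    field_simp
    linear_combination (toK f * Uu σ X Y * Uu σ i₀ X) * c2 - (toK f * Uu τ i₀ X * Uu τ X Y) * c1
  obtain ⟨φ₀, hφ₀app⟩ : ∃ φ : σ ≅ τ, ∀ i : Cn K n,
      toK (φ.hom.app i) = Uu τ i₀ i / Uu σ i₀ i :=
    ⟨NatIso.ofComponents (fun i => cnIso _ (hcne i)) (fun f => hnatc f), fun i => rfl⟩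
  -- a scalar satisfying the universal property must equal s
  have huniq : ∀ y : K, (∀ (φ : σ ≅ τ) (i : Cn K n),
      toK (σ.map (φ.hom.app i)) = y * toK (φ.hom.app (σ.obj i))) → y = s := by
    intro y hy
    have h1 := hy φ₀ i₀
    have h2 := key φ₀.hom i₀
    have h3 : y * toK (φ₀.hom.app (σ.obj i₀)) = s * toK (φ₀.hom.app (σ.obj i₀)) :=
      h1.symm.trans h2
    exact mul_right_cancel₀ (comp_ne_zero σ τ φ₀ (σ.obj i₀)) h3
  refine ⟨⟨s, ⟨hs0, fun φ i => key φ.hom i⟩, fun y hy => huniq y hy.2⟩, ?_⟩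
  intro s' _hs' hprop
  have hs's : s' = s := huniq s' hprop
  have hiff3 : (∃ φ : σ ≅ τ, ∀ i : Cn K n,
      toK (σ.map (φ.hom.app i)) = - toK (φ.hom.app (σ.obj i))) ↔ s' = -1 := by
    constructor
    · rintro ⟨φ, hφ⟩
      have h1 := hprop φ i₀
      have h2 := hφ i₀
      have h3 : s' * toK (φ.hom.app (σ.obj i₀)) = -1 * toK (φ.hom.app (σ.obj i₀)) := by
        rw [neg_one_mul, ← h2, ← h1]
      exact mul_right_cancel₀ (comp_ne_zero σ τ φ (σ.obj i₀)) h3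
    · intro h
      exact ⟨φ₀, fun i => by rw [hprop φ₀ i, h, neg_one_mul]⟩
  refine ⟨?_, hiff3⟩
  constructor
  · intro hP φ i
    rw [hprop φ i, hiff3.mp hP, neg_one_mul]
  · intro hall
    exact ⟨φ₀, hall φ₀⟩
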